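/- Let n ≥ 1 and define g : ℝ^n → ℝ by g(x_1,…,x_n) = e^{−(x_1+⋯+x_n)} if x_i ≥ 0 for all i = 1,…,n, and g(x) = 0 otherwise. Then Δg(z_1,…,z_n) = e^{−(|z_1|+⋯+|z_n|)} for all z ∈ ℝ^n, and consequently ∫_{ℝ^n} Δg(z) dz = 2^n ∫_{ℝ^n} g(x) dx. -/

import Mathlib

open MeasureTheory Set
open scoped ENNReal

/-- The difference function of `f`:
`Δf(z) = sup { √(f(x)·f(−y)) : (x+y)/2 = z }`, with values in `[0,∞]`. -/
noncomputable def diffFn {n : ℕ} (f : (Fin n → ℝ) → ℝ) (z : Fin n → ℝ) : ℝ≥0∞ :=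
  sSup {r : ℝ≥0∞ | ∃ x y : Fin n → ℝ, (1 / 2 : ℝ) • (x + y) = z ∧
    r = ENNReal.ofReal (Real.sqrt (f x * f (-y)))}

/-- `g(x) = e^{−(x₁+⋯+xₙ)}` on the nonnegative orthant and `0` elsewhere. -/
noncomputable def gExp (n : ℕ) : (Fin n → ℝ) → ℝ := fun x =>
  if ∀ i, 0 ≤ x i then Real.exp (-(∑ i, x i)) else 0

lemma lintegral_fin_prod : ∀ (n : ℕ) (f : Fin n → ℝ → ℝ≥0∞), (∀ i, Measurable (f i)) →
    (∫⁻ x : Fin n → ℝ, ∏ i, f i (x i)) = ∏ i, ∫⁻ t : ℝ, f i t := by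
  intro n
  induction n with
  | zero =>
      intro f hf
      simp [lintegral_const, volume_pi, Measure.pi_empty_univ]
  | succ n ih =>
      intro f hf
      have h := (measurePreserving_piFinSuccAbove (fun _ : Fin (n+1) => (volume : Measure ℝ)) 0).symm
      rw [volume_pi, ← h.lintegral_comp_emb (MeasurableEquiv.measurableEmbedding _)]
      simp_rw [MeasurableEquiv.piFinSuccAbove_symm_apply, Fin.insertNthEquiv,
        Fin.prod_univ_succ, Fin.insertNth_zero]
      simp only [Fin.zero_succAbove, Function.comp_def, Fin.cons_zero, Fin.cons_succ, cast_eq,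
        Equiv.coe_fn_mk]
      have hg : Measurable fun v : Fin n → ℝ => ∏ j : Fin n, f j.succ (v j) :=
        Finset.measurable_prod _ fun j _ => (hf j.succ).comp (measurable_pi_apply j)
      rw [lintegral_prod_mul (hf 0).aemeasurable hg.aemeasurable]
      rw [← volume_pi, ih (fun i => f i.succ) fun i => hf _]

lemma lint_half : (∫⁻ t : ℝ, ENNReal.ofReal (if 0 ≤ t then Real.exp (-t) else 0)) = 1 := by
  have heq : (fun t : ℝ => ENNReal.ofReal (if 0 ≤ t then Real.exp (-t) else 0))
      = (Ici (0:ℝ)).indicator fun t => ENNReal.ofReal (Real.exp (-t)) := by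
    funext t
    by_cases h : 0 ≤ t <;> simp [h, indicator, mem_Ici]
  have h2 : (∫⁻ t : ℝ, ENNReal.ofReal (if 0 ≤ t then Real.exp (-t) else 0))
      = ∫⁻ t in Ici (0:ℝ), ENNReal.ofReal (Real.exp (-t)) := by
    rw [← lintegral_indicator measurableSet_Ici _]
    exact lintegral_congr fun t => congrFun heq t
  rw [h2, Measure.restrict_congr_set Ioi_ae_eq_Ici.symm,
    ← ofReal_integral_eq_lintegral_ofReal]
  · rw [integral_exp_neg_Ioi_zero, ENNReal.ofReal_one]
  · simpa [IntegrableOn] using exp_neg_integrableOn_Ioi (0:ℝ) zero_lt_one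
  · filter_upwards with t using (Real.exp_pos _).le

lemma lint_abs : (∫⁻ t : ℝ, ENNReal.ofReal (Real.exp (-|t|))) = 2 := by
  rw [← lintegral_add_compl (fun t => ENNReal.ofReal (Real.exp (-|t|)))
    (measurableSet_Ioi (a := (0:ℝ))), compl_Ioi]
  have h1 : (∫⁻ t in Ioi (0:ℝ), ENNReal.ofReal (Real.exp (-|t|))) = 1 := by
    rw [setLIntegral_congr_fun measurableSet_Ioi
      (fun t (ht : t ∈ Ioi (0:ℝ)) => show ENNReal.ofReal (Real.exp (-|t|)) = ENNReal.ofReal (Real.exp (-t)) by rw [abs_of_pos ht]),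
      ← ofReal_integral_eq_lintegral_ofReal]
    · rw [integral_exp_neg_Ioi_zero, ENNReal.ofReal_one]
    · simpa [IntegrableOn] using exp_neg_integrableOn_Ioi (0:ℝ) zero_lt_one
    · filter_upwards with t using (Real.exp_pos _).le
  have h2 : (∫⁻ t in Iic (0:ℝ), ENNReal.ofReal (Real.exp (-|t|))) = 1 := by
    rw [setLIntegral_congr_fun measurableSet_Iic
      (fun t (ht : t ∈ Iic (0:ℝ)) => show ENNReal.ofReal (Real.exp (-|t|)) = ENNReal.ofReal (Real.exp t) by rw [abs_of_nonpos ht, neg_neg]),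
      ← ofReal_integral_eq_lintegral_ofReal]
    · rw [integral_exp_Iic_zero, ENNReal.ofReal_one]
    · exact integrableOn_exp_Iic 0
    · filter_upwards with t using (Real.exp_pos _).le
  rw [h1, h2, one_add_one_eq_two]

lemma diffFn_gExp_eq (n : ℕ) (z : Fin n → ℝ) :
    diffFn (gExp n) z = ENNReal.ofReal (Real.exp (-(∑ i, |z i|))) := by
  apply le_antisymm
  · apply sSup_le
    rintro r ⟨x, y, hxy, rfl⟩
    apply ENNReal.ofReal_le_ofReal
    simp only [gExp, Pi.neg_apply]
    have hsum : ∀ i, x i + y i = 2 * z i := by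
      intro i
      have h := congrFun hxy i
      simp only [Pi.smul_apply, Pi.add_apply, smul_eq_mul] at h
      linarith
    by_cases hx : ∀ i, 0 ≤ x i
    · by_cases hy : ∀ i, 0 ≤ -y i
      · rw [if_pos hx, if_pos hy, ← Real.exp_add, ← Real.exp_half]
        apply Real.exp_le_exp.mpr
        have key : ∀ i ∈ Finset.univ, 2 * |z i| ≤ x i - y i := by
          intro i _
          have h1 := hx i
          have h2 : (0:ℝ) ≤ -y i := hy i
          have h3 := hsum i
          have h4 : |x i + y i| ≤ x i - y i := abs_le.mpr ⟨by linarith, by linarith⟩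
          calc 2 * |z i| = |2 * z i| := by rw [abs_mul]; norm_num
            _ = |x i + y i| := by rw [h3]
            _ ≤ x i - y i := h4
        have hs := Finset.sum_le_sum key
        rw [Finset.sum_sub_distrib, ← Finset.mul_sum] at hs
        have hys : ∑ i, -y i = -∑ i, y i := by simp
        rw [hys]
        linarith
      · rw [if_neg hy, mul_zero, Real.sqrt_zero]
        exact (Real.exp_pos _).le
    · rw [if_neg hx, zero_mul, Real.sqrt_zero]
      exact (Real.exp_pos _).le
  · apply le_sSup
    refine ⟨fun i => z i + |z i|, fun i => z i - |z i|, ?_, ?_⟩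
    · funext i
      simp only [Pi.smul_apply, Pi.add_apply, smul_eq_mul]
      ring
    · have hx : ∀ i, (0:ℝ) ≤ z i + |z i| := fun i => by
        have := neg_abs_le (z i); linarith
      have hy : ∀ i, (0:ℝ) ≤ -(z i - |z i|) := fun i => by
        have := le_abs_self (z i); linarith
      simp only [gExp, Pi.neg_apply]
      rw [if_pos hx, if_pos hy, ← Real.exp_add, ← Real.exp_half]
      congr 2
      have : ∑ i, (z i + |z i|) + ∑ i, -(z i - |z i|) = 2 * ∑ i, |z i| := by
        rw [← Finset.sum_add_distrib, Finset.mul_sum]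
        exact Finset.sum_congr rfl fun i _ => by ring
      linarith

/-- For `g` as above, `Δg(z) = e^{−(|z₁|+⋯+|zₙ|)}` and
`∫ Δg = 2^n ∫ g`: the inequality of the functional Rogers–Shephard theorem is sharp. -/
theorem diffFn_gExp (n : ℕ) (hn : 1 ≤ n) :
    (∀ z : Fin n → ℝ, diffFn (gExp n) z = ENNReal.ofReal (Real.exp (-(∑ i, |z i|)))) ∧
    ∫⁻ z, diffFn (gExp n) z = 2 ^ n * ∫⁻ x, ENNReal.ofReal (gExp n x) := by
  refine ⟨diffFn_gExp_eq n, ?_⟩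
  have hL : (∫⁻ z : Fin n → ℝ, diffFn (gExp n) z)
      = ∫⁻ z : Fin n → ℝ, ∏ i, ENNReal.ofReal (Real.exp (-|z i|)) := by
    refine lintegral_congr fun z => ?_
    rw [diffFn_gExp_eq n z, ← ENNReal.ofReal_prod_of_nonneg (fun i _ => (Real.exp_pos _).le),
      ← Real.exp_sum, Finset.sum_neg_distrib]
  have hR : (∫⁻ x : Fin n → ℝ, ENNReal.ofReal (gExp n x))
      = ∫⁻ x : Fin n → ℝ, ∏ i, ENNReal.ofReal (if 0 ≤ x i then Real.exp (-x i) else 0) := by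
    refine lintegral_congr fun x => ?_
    rw [← ENNReal.ofReal_prod_of_nonneg (fun i _ => by
      split_ifs <;> [exact (Real.exp_pos _).le; exact le_rfl])]
    congr 1
    by_cases h : ∀ i, 0 ≤ x i
    · simp only [gExp, if_pos h]
      rw [Finset.prod_congr rfl fun i _ => if_pos (h i), ← Real.exp_sum,
        Finset.sum_neg_distrib]
    · simp only [gExp, if_neg h]
      push_neg at h
      obtain ⟨i, hi⟩ := h
      exact (Finset.prod_eq_zero (Finset.mem_univ i) (show (if 0 ≤ x i then Real.exp (-x i) else 0) = 0 from if_neg (not_le.mpr hi))).symm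
  rw [hL, hR,
    lintegral_fin_prod n (fun _ t => ENNReal.ofReal (Real.exp (-|t|)))
      (fun i => (measurable_abs.neg.exp).ennreal_ofReal),
    lintegral_fin_prod n (fun _ t => ENNReal.ofReal (if 0 ≤ t then Real.exp (-t) else 0))
      (fun i => (Measurable.ite (measurableSet_le measurable_const measurable_id)
        measurable_neg.exp measurable_const).ennreal_ofReal)]
  simp [lint_abs, lint_half]
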